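/- For every cost function c : (Fin n → Bool) → ℝ and every real γ, with |γ⟩ := exp(−(iγ)•C) *ᵥ s, the expectation of the Hermitian operator i∇C in the phased state satisfies star|γ⟩ ⬝ᵥ ((i•(B·C − C·B)) *ᵥ |γ⟩) = −(2/2^n)·∑_x c(x)·∑_{j} sin(γ·∂_j c(x)). -/

import Mathlib

open Matrix Asymptotics

noncomputable section

abbrev Bits (n : ℕ) := Fin n → Bool

/-- `x` with bit `j` flipped. -/
def flipBit {n : ℕ} (j : Fin n) (x : Bits n) : Bits n := Function.update x j (!x j)

/-- The bit-flip operator `X_j`. -/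
def Xop {n : ℕ} (j : Fin n) : Matrix (Bits n) (Bits n) ℂ :=
  fun x y => if y = flipBit j x then 1 else 0

/-- The transverse-field mixing Hamiltonian `B = ∑ⱼ Xⱼ`. -/
def Bop (n : ℕ) : Matrix (Bits n) (Bits n) ℂ := ∑ j : Fin n, Xop j

/-- The cost Hamiltonian: diagonal matrix with entries `c x`. -/
def Cop {n : ℕ} (c : Bits n → ℝ) : Matrix (Bits n) (Bits n) ℂ :=
  Matrix.diagonal fun x => (c x : ℂ)

/-- The gradient superoperator `∇A = [B, A]`. -/
def gradB {n : ℕ} (A : Matrix (Bits n) (Bits n) ℂ) : Matrix (Bits n) (Bits n) ℂ :=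
  Bop n * A - A * Bop n

/-- The gradient with respect to the cost Hamiltonian `∇_C A = [C, A]`. -/
def gradC {n : ℕ} (c : Bits n → ℝ) (A : Matrix (Bits n) (Bits n) ℂ) :
    Matrix (Bits n) (Bits n) ℂ :=
  Cop c * A - A * Cop c

/-- The uniform superposition state `|s⟩`, every entry `(2^n)^{-1/2}`. -/
def sVec (n : ℕ) : Bits n → ℂ := fun _ => ((Real.sqrt (2 ^ n))⁻¹ : ℝ)

/-- Initial-state expectation value `⟨A⟩₀ = ⟨s|A|s⟩`. -/
def expect0 {n : ℕ} (A : Matrix (Bits n) (Bits n) ℂ) : ℂ :=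
  star (sVec n) ⬝ᵥ (A *ᵥ sVec n)

/-- Partial cost difference `∂ⱼc(x) = c(x⁽ʲ⁾) − c(x)`. -/
def pd {n : ℕ} (c : Bits n → ℝ) (j : Fin n) (x : Bits n) : ℝ := c (flipBit j x) - c x

/-- Cost divergence `dc(x) = ∑ⱼ ∂ⱼc(x)`. -/
def dcFun {n : ℕ} (c : Bits n → ℝ) (x : Bits n) : ℝ := ∑ j : Fin n, pd c j x

/-- The phased state `|γ⟩ = exp(−iγC)|s⟩`. -/
def phaseState {n : ℕ} (c : Bits n → ℝ) (γ : ℝ) : Bits n → ℂ :=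
  NormedSpace.exp ((-(Complex.I * (γ : ℂ))) • Cop c) *ᵥ sVec n


lemma aux_key (γ a b : ℝ) :
    Complex.I * ((b:ℂ) - a) * Complex.exp (Complex.I*γ*a - Complex.I*γ*b)
      + Complex.I * ((a:ℂ) - b) * Complex.exp (Complex.I*γ*b - Complex.I*γ*a)
      = ((-2 * (a * Real.sin (γ*(b-a)) + b * Real.sin (γ*(a-b))) : ℝ) : ℂ) := by
  have h1 : Complex.I*(γ:ℂ)*a - Complex.I*γ*b = ((γ*(a-b):ℝ):ℂ) * Complex.I := by push_cast; ring
  have h2 : Complex.I*(γ:ℂ)*b - Complex.I*γ*a = ((γ*(b-a):ℝ):ℂ) * Complex.I := by push_cast; ring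
  rw [h1, h2, Complex.exp_mul_I, Complex.exp_mul_I,
    show (γ*(a-b):ℝ) = -(γ*(b-a)) by ring]
  push_cast [Real.sin_neg, Real.cos_neg]
  rw [Complex.sin_neg, Complex.cos_neg]
  ring_nf
  rw [Complex.I_sq]
  ring

lemma aux_flipBit_inv {n : ℕ} (j : Fin n) : Function.Involutive (flipBit j) := by
  intro x
  funext k
  by_cases h : k = j <;> simp [flipBit, Function.update_apply, h]

lemma aux_phaseState_apply {n : ℕ} (c : Bits n → ℝ) (γ : ℝ) (x : Bits n) :
    phaseState c γ x
      = Complex.exp (-(Complex.I * γ) * c x) * ((Real.sqrt (2 ^ n))⁻¹ : ℝ) := by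
  have h : (-(Complex.I * (γ : ℂ))) • Cop c
      = Matrix.diagonal (fun x => -(Complex.I * γ) * c x) := by
    rw [Cop, ← Matrix.diagonal_smul]
    congr 1
  rw [phaseState, h, Matrix.exp_diagonal, Matrix.mulVec_diagonal]
  simp [sVec, Pi.exp_def, Complex.exp_eq_exp_ℂ]

lemma aux_entry {n : ℕ} (c : Bits n → ℝ) (v : Bits n → ℂ) (x : Bits n) :
    star v x * (((Complex.I • (Bop n * Cop c - Cop c * Bop n)) *ᵥ v) x)
    = ∑ j : Fin n,
        (starRingEnd ℂ) (v x) * (Complex.I * (((c (flipBit j x) : ℂ)) - c x) * v (flipBit j x)) := by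
  have hE : ∀ y, (Bop n * Cop c - Cop c * Bop n) x y
      = ∑ j : Fin n, (if y = flipBit j x then ((c y : ℂ) - c x) else 0) := by
    intro y
    simp only [Matrix.sub_apply, Cop, Matrix.mul_diagonal, Matrix.diagonal_mul, Bop,
      Finset.sum_apply, Matrix.sum_apply, Xop]
    rw [Finset.sum_mul, Finset.mul_sum, ← Finset.sum_sub_distrib]
    congr 1; funext j
    by_cases h : y = flipBit j x <;> simp [h]
  rw [Matrix.mulVec]
  show star v x * (∑ y, (Complex.I • (Bop n * Cop c - Cop c * Bop n)) x y * v y) = _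
  simp only [Matrix.smul_apply, smul_eq_mul]
  rw [Finset.mul_sum]
  rw [show (∑ y, star v x * (Complex.I * (Bop n * Cop c - Cop c * Bop n) x y * v y))
      = ∑ y, ∑ j : Fin n, (if y = flipBit j x then
          star v x * (Complex.I * ((c y : ℂ) - c x) * v y) else 0) from ?_]
  · rw [Finset.sum_comm]
    congr 1; funext j
    simp
  · congr 1; funext y
    rw [hE, Finset.mul_sum, Finset.sum_mul, Finset.mul_sum]
    congr 1; funext j
    by_cases h : y = flipBit j x <;> simp [h]

lemma aux_perj {n : ℕ} (c : Bits n → ℝ) (γ : ℝ) (j : Fin n)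
    (v : Bits n → ℂ)
    (hvx : ∀ x, v x = Complex.exp (-(Complex.I * γ) * c x) * ((Real.sqrt (2 ^ n))⁻¹ : ℝ)) :
    ∑ x : Bits n, (starRingEnd ℂ) (v x) *
        (Complex.I * (((c (flipBit j x) : ℂ)) - c x) * v (flipBit j x))
      = ∑ x : Bits n, ((-(2 / 2 ^ n) * (c x * Real.sin (γ * pd c j x)) : ℝ) : ℂ) := by
  set s0 : ℝ := (Real.sqrt (2 ^ n))⁻¹ with hs0
  have hs0sq : (s0 : ℝ)^2 = ((2:ℝ)^n)⁻¹ := by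
    rw [hs0, ← Real.sqrt_inv, Real.sq_sqrt (by positivity)]
  set F : Bits n → ℂ := fun x => (starRingEnd ℂ) (v x) *
      (Complex.I * (((c (flipBit j x) : ℂ)) - c x) * v (flipBit j x)) with hF
  set G : Bits n → ℂ := fun x => ((-(2 / 2 ^ n) * (c x * Real.sin (γ * pd c j x)) : ℝ) : ℂ) with hG
  have hFx : ∀ x, F x = ((s0^2 : ℝ) : ℂ) *
      (Complex.I * (((c (flipBit j x) : ℂ)) - c x) *
        Complex.exp (Complex.I*γ*(c x) - Complex.I*γ*(c (flipBit j x)))) := by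
    intro x
    rw [hF]
    simp only [hvx]
    have hconj : (starRingEnd ℂ) (Complex.exp (-(Complex.I * γ) * c x))
        = Complex.exp (Complex.I * γ * c x) := by
      rw [← Complex.exp_conj]
      congr 1
      rw [RingHom.map_mul, RingHom.map_neg, RingHom.map_mul, Complex.conj_I,
        Complex.conj_ofReal, Complex.conj_ofReal]
      ring
    rw [RingHom.map_mul, hconj, Complex.conj_ofReal]
    rw [show Complex.I*(γ:ℂ)*(c x) - Complex.I*γ*(c (flipBit j x))
        = Complex.I*(γ:ℂ)*(c x) + (-(Complex.I*(γ:ℂ)) * (c (flipBit j x))) from by ring]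
    rw [Complex.exp_add]
    push_cast
    ring
  have hpair : ∀ x, F x + F (flipBit j x) = G x + G (flipBit j x) := by
    intro x
    have hff : flipBit j (flipBit j x) = x := aux_flipBit_inv j x
    rw [hFx, hFx, hff, hG]
    simp only [hff]
    rw [← mul_add, aux_key γ (c x) (c (flipBit j x))]
    rw [← Complex.ofReal_mul, ← Complex.ofReal_add]
    congr 1
    rw [hs0sq, pd, pd, hff]
    ring
  have hcomp : ∀ f : Bits n → ℂ, ∑ x : Bits n, f (flipBit j x) = ∑ x : Bits n, f x := by
    intro f
    exact Fintype.sum_equiv ((aux_flipBit_inv j).toPerm) _ _ (fun x => rfl)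
  have h2 : (2:ℂ) * ∑ x : Bits n, F x = (2:ℂ) * ∑ x : Bits n, G x := by
    rw [two_mul, two_mul]
    nth_rewrite 2 [← hcomp F]
    nth_rewrite 2 [← hcomp G]
    rw [← Finset.sum_add_distrib, ← Finset.sum_add_distrib]
    exact Finset.sum_congr rfl (fun x _ => hpair x)
  exact mul_left_cancel₀ two_ne_zero h2

theorem stmt11 (n : ℕ) (hn : 1 ≤ n) (c : Bits n → ℝ) (γ : ℝ) :
    star (phaseState c γ) ⬝ᵥ
        ((Complex.I • (Bop n * Cop c - Cop c * Bop n)) *ᵥ phaseState c γ)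
      = ((-(2 / 2 ^ n) * ∑ x : Bits n, c x * ∑ j : Fin n, Real.sin (γ * pd c j x) : ℝ) : ℂ) := by
  set v := phaseState c γ with hv
  have hvx : ∀ x, v x = Complex.exp (-(Complex.I * γ) * c x) * ((Real.sqrt (2 ^ n))⁻¹ : ℝ) :=
    aux_phaseState_apply c γ
  have hLHS : star v ⬝ᵥ ((Complex.I • (Bop n * Cop c - Cop c * Bop n)) *ᵥ v)
      = ∑ j : Fin n, ∑ x : Bits n,
          (starRingEnd ℂ) (v x) *
            (Complex.I * (((c (flipBit j x) : ℂ)) - c x) * v (flipBit j x)) := by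
    rw [dotProduct, Finset.sum_comm]
    exact Finset.sum_congr rfl (fun x _ => aux_entry c v x)
  rw [hLHS]
  have hRHSr : (-(2 / 2 ^ n) * ∑ x : Bits n, c x * ∑ j : Fin n, Real.sin (γ * pd c j x) : ℝ)
      = ∑ j : Fin n, ∑ x : Bits n, (-(2 / 2 ^ n) * (c x * Real.sin (γ * pd c j x)) : ℝ) := by
    rw [Finset.mul_sum, Finset.sum_comm]
    exact Finset.sum_congr rfl (fun x _ => by rw [Finset.mul_sum, Finset.mul_sum])
  rw [hRHSr, Complex.ofReal_sum]
  refine Finset.sum_congr rfl (fun j _ => ?_)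
  rw [Complex.ofReal_sum]
  exact aux_perj c γ j v hvx
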